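/- Let μ > 1, 0 < α < 1 and c > 0 be real numbers, and let r : ℕ → ℝ be nonnegative with r(0) = 0 and r(n)·n^μ·α^n → c as n → ∞; set ρ := ∑_{n≥1} r(n)·α^n (a convergent series, assumed positive). Define δ₂(n) := ∑_{s+t+u=n} r(s)·r(t)·C(u+2, 2) and, for 1 ≤ x ≤ n, δ₂(n, x) := 2·r(x)·∑_{t=1}^{min(x, n−x)} r(t)·C(n − x − t + 2, 2). Then for each fixed integer a ≥ 1, with c_a := ∑_{i=1}^a C(a − i + 2, 2)·r(i), one has lim_{n→∞} δ₂(n, n − a)/δ₂(n) = (1−α)³·c_a·α^a/ρ. -/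

import Mathlib

open Filter Finset

lemma my_shift {α μ : ℝ} (hα0 : 0 < α) (hμ0 : 0 < μ)
    {p : ℕ → ℝ} {c : ℝ}
    (hp : Tendsto (fun n : ℕ => p n * α ^ n * (n : ℝ) ^ μ) atTop (nhds c)) (m : ℕ) :
    Tendsto (fun n : ℕ => p (n - m) * α ^ (n - m) * (n : ℝ) ^ μ) atTop (nhds c) := by
  have hratio : Tendsto (fun n : ℕ => (n : ℝ) / ((n - m : ℕ) : ℝ)) atTop (nhds 1) := by
    have h1 : Tendsto (fun n : ℕ => (m : ℝ) / ((n - m : ℕ) : ℝ)) atTop (nhds 0) :=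
      (tendsto_const_div_atTop_nhds_zero_nat (m : ℝ)).comp (tendsto_sub_atTop_nat m)
    have h2 : Tendsto (fun n : ℕ => 1 + (m : ℝ) / ((n - m : ℕ) : ℝ)) atTop (nhds 1) := by
      simpa using tendsto_const_nhds.add h1
    apply h2.congr'
    filter_upwards [eventually_ge_atTop (m + 1)] with n hn
    have hnm : ((n - m : ℕ) : ℝ) = (n : ℝ) - m := by
      push_cast [Nat.cast_sub (by omega : m ≤ n)]; ring
    have hpos : (0 : ℝ) < ((n - m : ℕ) : ℝ) := by
      have : 1 ≤ n - m := by omega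
      exact_mod_cast Nat.lt_of_lt_of_le Nat.zero_lt_one this
    rw [hnm]
    have hne : (n:ℝ) - m ≠ 0 := by rw [← hnm]; positivity
    field_simp
    ring
  have hratio' : Tendsto (fun n : ℕ => ((n : ℝ) / ((n - m : ℕ) : ℝ)) ^ μ) atTop (nhds 1) := by
    have := hratio.rpow_const (p := μ) (Or.inl one_ne_zero)
    simpa using this
  have hcomp : Tendsto (fun n : ℕ => p (n - m) * α ^ (n - m) * ((n - m : ℕ) : ℝ) ^ μ)
      atTop (nhds c) := hp.comp (tendsto_sub_atTop_nat m)
  have := hcomp.mul hratio'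
  rw [mul_one] at this
  apply this.congr'
  filter_upwards [eventually_ge_atTop (m + 1)] with n hn
  have hpos : (0 : ℝ) < ((n - m : ℕ) : ℝ) := by
    have : 1 ≤ n - m := by omega
    exact_mod_cast Nat.lt_of_lt_of_le Nat.zero_lt_one this
  rw [Real.div_rpow (by positivity) hpos.le]
  field_simp

lemma my_rpow_add_bound {μ : ℝ} (hμ : 0 ≤ μ) {x y : ℝ} (hx : 0 ≤ x) (hy : 0 ≤ y) :
    (x + y) ^ μ ≤ 2 ^ μ * (x ^ μ + y ^ μ) := by
  have hmax : x + y ≤ 2 * max x y := by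
    rcases le_total x y with h | h
    · rw [max_eq_right h]; linarith
    · rw [max_eq_left h]; linarith
  have h0 : (0:ℝ) ≤ max x y := le_max_of_le_left hx
  calc (x + y) ^ μ ≤ (2 * max x y) ^ μ := Real.rpow_le_rpow (by positivity) hmax hμ
    _ = 2 ^ μ * (max x y) ^ μ := Real.mul_rpow (by norm_num) h0
    _ ≤ 2 ^ μ * (x ^ μ + y ^ μ) := by
        have : (max x y) ^ μ ≤ x ^ μ + y ^ μ := by
          rcases le_total x y with h | h
          · rw [max_eq_right h]
            have := Real.rpow_nonneg hx μ
            linarith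
          · rw [max_eq_left h]
            have := Real.rpow_nonneg hy μ
            linarith
        have h2 : (0:ℝ) ≤ (2:ℝ) ^ μ := Real.rpow_nonneg (by norm_num) μ
        nlinarith
lemma my_sum_tail_le {f : ℕ → ℝ} (h0 : ∀ n, 0 ≤ f n) {F : ℝ} (hF : HasSum f F) (K : ℕ)
    {S : Finset ℕ} (hS : ∀ m ∈ S, K ≤ m) :
    ∑ m ∈ S, f m ≤ F - ∑ m ∈ Finset.range K, f m := by
  have hd : Disjoint (Finset.range K) S := by
    rw [Finset.disjoint_left]
    intro x hx hxS
    have := hS x hxS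
    simp only [Finset.mem_range] at hx
    omega
  have h := sum_le_hasSum (Finset.range K ∪ S) (fun i _ => h0 i) hF
  rw [Finset.sum_union hd] at h
  linarith

lemma my_conv_asymp {α μ : ℝ} (hα0 : 0 < α) (hμ : 1 < μ)
    {p q : ℕ → ℝ} (hp0 : ∀ n, 0 ≤ p n) (hq0 : ∀ n, 0 ≤ q n)
    {cp cq P Q : ℝ}
    (hp : Tendsto (fun n : ℕ => p n * α ^ n * (n : ℝ) ^ μ) atTop (nhds cp))
    (hq : Tendsto (fun n : ℕ => q n * α ^ n * (n : ℝ) ^ μ) atTop (nhds cq))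
    (hP : HasSum (fun n => p n * α ^ n) P)
    (hQ : HasSum (fun n => q n * α ^ n) Q) :
    Tendsto (fun n : ℕ => (∑ m ∈ Finset.range (n + 1), p m * q (n - m)) * α ^ n * (n : ℝ) ^ μ)
      atTop (nhds (cp * Q + cq * P)) := by
  have hμ0 : (0:ℝ) < μ := by linarith
  set p' : ℕ → ℝ := fun n => p n * α ^ n with hp'def
  set q' : ℕ → ℝ := fun n => q n * α ^ n with hq'def
  obtain ⟨Mp, hMp⟩ := hp.bddAbove_range
  obtain ⟨Mq, hMq⟩ := hq.bddAbove_range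
  set M : ℝ := max 1 (max Mp Mq) with hMdef
  have hM1 : (1:ℝ) ≤ M := le_max_left _ _
  have hM0 : (0:ℝ) < M := lt_of_lt_of_le one_pos hM1
  have hMp' : ∀ n : ℕ, p' n * (n:ℝ) ^ μ ≤ M := fun n => by
    have := hMp (Set.mem_range_self n)
    calc p' n * (n:ℝ) ^ μ = p n * α ^ n * (n:ℝ) ^ μ := rfl
      _ ≤ Mp := this
      _ ≤ M := le_trans (le_max_left _ _) (le_max_right _ _)
  have hMq' : ∀ n : ℕ, q' n * (n:ℝ) ^ μ ≤ M := fun n => by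
    have := hMq (Set.mem_range_self n)
    calc q' n * (n:ℝ) ^ μ = q n * α ^ n * (n:ℝ) ^ μ := rfl
      _ ≤ Mq := this
      _ ≤ M := le_trans (le_max_right _ _) (le_max_right _ _)
  have hcp0 : 0 ≤ cp := ge_of_tendsto hp (Eventually.of_forall fun n =>
    mul_nonneg (mul_nonneg (hp0 n) (by positivity)) (by positivity))
  have hcq0 : 0 ≤ cq := ge_of_tendsto hq (Eventually.of_forall fun n =>
    mul_nonneg (mul_nonneg (hq0 n) (by positivity)) (by positivity))
  have hcpM : cp ≤ M := le_of_tendsto hp (Eventually.of_forall fun n => hMp' n)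
  have hcqM : cq ≤ M := le_of_tendsto hq (Eventually.of_forall fun n => hMq' n)
  have hp'0 : ∀ n, 0 ≤ p' n := fun n => mul_nonneg (hp0 n) (by positivity)
  have hq'0 : ∀ n, 0 ≤ q' n := fun n => mul_nonneg (hq0 n) (by positivity)
  have hS : ∀ n : ℕ, (∑ m ∈ Finset.range (n + 1), p m * q (n - m)) * α ^ n * (n : ℝ) ^ μ
      = ∑ m ∈ Finset.range (n + 1), p' m * q' (n - m) * (n : ℝ) ^ μ := by
    intro n
    rw [Finset.sum_mul, Finset.sum_mul]
    refine Finset.sum_congr rfl fun m hm => ?_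
    simp only [Finset.mem_range] at hm
    have hmn : m + (n - m) = n := by omega
    simp only [hp'def, hq'def]
    have hpow : α ^ n = α ^ m * α ^ (n - m) := by rw [← pow_add, hmn]
    rw [hpow]
    ring
  simp only [hS]
  rw [Metric.tendsto_atTop]
  intro ε hε
  have h2pow : (0:ℝ) < 2 ^ μ := Real.rpow_pos_of_pos (by norm_num) μ
  set D : ℝ := 2 ^ μ * M * 2 + 2 * M + 2 with hDdef
  have hD : 0 < D := by positivity
  set ε' : ℝ := ε / (2 * D) with hε'def
  have hε' : 0 < ε' := by positivity
  have hTp : Tendsto (fun K => P - ∑ m ∈ Finset.range K, p' m) atTop (nhds 0) := by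
    have h1 : Tendsto (fun K : ℕ => P - ∑ m ∈ Finset.range K, p' m) atTop (nhds (P - P)) :=
      tendsto_const_nhds.sub hP.tendsto_sum_nat
    simpa using h1
  have hTq : Tendsto (fun K => Q - ∑ m ∈ Finset.range K, q' m) atTop (nhds 0) := by
    have h1 : Tendsto (fun K : ℕ => Q - ∑ m ∈ Finset.range K, q' m) atTop (nhds (Q - Q)) :=
      tendsto_const_nhds.sub hQ.tendsto_sum_nat
    simpa using h1
  obtain ⟨K, ⟨hKp, hKq⟩, hK1⟩ :=
    (((hTp.eventually_lt_const hε').and (hTq.eventually_lt_const hε')).and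
      (eventually_ge_atTop 1)).exists
  set PK := ∑ m ∈ Finset.range K, p' m with hPK
  set QK := ∑ m ∈ Finset.range K, q' m with hQK
  have hPKle : PK ≤ P := by
    simpa [hPK] using sum_le_hasSum (Finset.range K) (fun i _ => hp'0 i) hP
  have hQKle : QK ≤ Q := by
    simpa [hQK] using sum_le_hasSum (Finset.range K) (fun i _ => hq'0 i) hQ
  have hA : Tendsto (fun n : ℕ => ∑ m ∈ Finset.range K, p' m * q' (n - m) * (n:ℝ) ^ μ)
      atTop (nhds (PK * cq)) := by
    have hterm : ∀ m : ℕ, Tendsto (fun n : ℕ => p' m * q' (n - m) * (n:ℝ) ^ μ)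
        atTop (nhds (p' m * cq)) := by
      intro m
      have h1 := (my_shift hα0 hμ0 hq m).const_mul (p' m)
      apply h1.congr
      intro n
      simp only [hq'def]
      ring
    have := tendsto_finset_sum (Finset.range K) (fun m _ => hterm m)
    simpa [← Finset.sum_mul, hPK] using this
  have hC : Tendsto
      (fun n : ℕ => ∑ j ∈ Finset.range K, q' j * (p (n - j) * α ^ (n - j) * (n:ℝ) ^ μ))
      atTop (nhds (QK * cp)) := by
    have := tendsto_finset_sum (Finset.range K)
      (fun j _ => ((my_shift hα0 hμ0 hp j).const_mul (q' j)))
    simpa [← Finset.sum_mul, hQK] using this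
  rw [Metric.tendsto_atTop] at hA hC
  obtain ⟨N₁, hN₁⟩ := hA ε' hε'
  obtain ⟨N₂, hN₂⟩ := hC ε' hε'
  refine ⟨max (max N₁ N₂) (2 * K + 1), fun n hn => ?_⟩
  have hn1 : N₁ ≤ n := le_trans (le_trans (le_max_left _ _) (le_max_left _ _)) hn
  have hn2 : N₂ ≤ n := le_trans (le_trans (le_max_right _ _) (le_max_left _ _)) hn
  have hnK : 2 * K + 1 ≤ n := le_trans (le_max_right _ _) hn
  have hAn := hN₁ n hn1
  have hCn := hN₂ n hn2
  rw [Real.dist_eq] at hAn hCn ⊢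
  -- decomposition of the sum
  have hsplit : Finset.range (n+1)
      = (Finset.range K ∪ Finset.Icc K (n - K)) ∪ Finset.Icc (n - K + 1) n := by
    ext x
    simp only [Finset.mem_range, Finset.mem_union, Finset.mem_Icc]
    omega
  have hd1 : Disjoint (Finset.range K) (Finset.Icc K (n - K)) := by
    rw [Finset.disjoint_left]
    intro x hx hx'
    simp only [Finset.mem_range] at hx
    simp only [Finset.mem_Icc] at hx'
    omega
  have hd2 : Disjoint (Finset.range K ∪ Finset.Icc K (n - K)) (Finset.Icc (n - K + 1) n) := by
    rw [Finset.disjoint_left]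
    intro x hx hx'
    simp only [Finset.mem_union, Finset.mem_range, Finset.mem_Icc] at hx hx'
    omega
  have hsum_split : ∑ m ∈ Finset.range (n+1), p' m * q' (n - m) * (n:ℝ) ^ μ
      = (∑ m ∈ Finset.range K, p' m * q' (n - m) * (n:ℝ) ^ μ)
        + (∑ m ∈ Finset.Icc K (n - K), p' m * q' (n - m) * (n:ℝ) ^ μ)
        + ∑ m ∈ Finset.Icc (n - K + 1) n, p' m * q' (n - m) * (n:ℝ) ^ μ := by
    rw [hsplit, Finset.sum_union hd2, Finset.sum_union hd1]
  have hthird : ∑ m ∈ Finset.Icc (n - K + 1) n, p' m * q' (n - m) * (n:ℝ) ^ μ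
      = ∑ j ∈ Finset.range K, q' j * (p (n - j) * α ^ (n - j) * (n:ℝ) ^ μ) := by
    refine Finset.sum_nbij' (fun m => n - m) (fun j => n - j) ?_ ?_ ?_ ?_ ?_
    · intro m hm
      simp only [Finset.mem_Icc] at hm
      simp only [Finset.mem_range]
      omega
    · intro j hj
      simp only [Finset.mem_range] at hj
      simp only [Finset.mem_Icc]
      omega
    · intro m hm
      simp only [Finset.mem_Icc] at hm
      show n - (n - m) = m
      omega
    · intro j hj
      simp only [Finset.mem_range] at hj
      show n - (n - j) = j
      omega
    · intro m hm
      simp only [Finset.mem_Icc] at hm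
      show p' m * q' (n - m) * (n:ℝ) ^ μ
        = q' (n - m) * (p (n - (n - m)) * α ^ (n - (n - m)) * (n:ℝ) ^ μ)
      have h1 : n - (n - m) = m := by omega
      rw [h1]
      simp only [hp'def, hq'def]
      ring
  -- middle bound
  have hmid_nonneg : 0 ≤ ∑ m ∈ Finset.Icc K (n - K), p' m * q' (n - m) * (n:ℝ) ^ μ :=
    Finset.sum_nonneg fun m _ => by
      have := hp'0 m; have := hq'0 (n - m); positivity
  have hptail : ∑ m ∈ Finset.Icc K (n - K), p' m ≤ P - PK :=
    my_sum_tail_le hp'0 hP K (fun m hm => (Finset.mem_Icc.1 hm).1)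
  have hqtail : ∑ m ∈ Finset.Icc K (n - K), q' (n - m) ≤ Q - QK := by
    have hinj : ∀ x ∈ Finset.Icc K (n - K), ∀ y ∈ Finset.Icc K (n - K),
        n - x = n - y → x = y := by
      intro x hx y hy hxy
      simp only [Finset.mem_Icc] at hx hy
      omega
    have himg : ∑ j ∈ (Finset.Icc K (n - K)).image (fun m => n - m), q' j
        = ∑ m ∈ Finset.Icc K (n - K), q' (n - m) := Finset.sum_image hinj
    rw [← himg]
    apply my_sum_tail_le hq'0 hQ K
    intro j hj
    simp only [Finset.mem_image, Finset.mem_Icc] at hj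
    obtain ⟨m, hm, rfl⟩ := hj
    omega
  have hmid_le : ∑ m ∈ Finset.Icc K (n - K), p' m * q' (n - m) * (n:ℝ) ^ μ
      ≤ 2 ^ μ * M * (2 * ε') := by
    have hterm : ∀ m ∈ Finset.Icc K (n - K), p' m * q' (n - m) * (n:ℝ) ^ μ
        ≤ 2 ^ μ * M * q' (n - m) + 2 ^ μ * M * p' m := by
      intro m hm
      simp only [Finset.mem_Icc] at hm
      have hm1 : 1 ≤ m := le_trans hK1 hm.1
      have hcast : (n : ℝ) = (m : ℝ) + ((n - m : ℕ) : ℝ) := by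
        have h' : m + (n - m) = n := by omega
        have h2 := congrArg (fun k : ℕ => (k : ℝ)) h'
        push_cast at h2
        linarith
      have hrp : (n:ℝ) ^ μ ≤ 2 ^ μ * ((m:ℝ) ^ μ + ((n - m : ℕ):ℝ) ^ μ) := by
        rw [hcast]
        exact my_rpow_add_bound hμ0.le (by positivity) (by positivity)
      have hp'nn := hp'0 m
      have hq'nn := hq'0 (n - m)
      have h1 : p' m * (m:ℝ) ^ μ * q' (n - m) ≤ M * q' (n - m) :=
        mul_le_mul_of_nonneg_right (hMp' m) hq'nn
      have h2 : p' m * (q' (n - m) * ((n - m : ℕ):ℝ) ^ μ) ≤ p' m * M :=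
        mul_le_mul_of_nonneg_left (hMq' (n - m)) hp'nn
      calc p' m * q' (n - m) * (n:ℝ) ^ μ
          ≤ p' m * q' (n - m) * (2 ^ μ * ((m:ℝ) ^ μ + ((n - m : ℕ):ℝ) ^ μ)) :=
            mul_le_mul_of_nonneg_left hrp (mul_nonneg hp'nn hq'nn)
        _ = 2 ^ μ * (p' m * (m:ℝ) ^ μ * q' (n - m))
            + 2 ^ μ * (p' m * (q' (n - m) * ((n - m : ℕ):ℝ) ^ μ)) := by ring
        _ ≤ 2 ^ μ * (M * q' (n - m)) + 2 ^ μ * (p' m * M) := by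
            have := mul_le_mul_of_nonneg_left h1 h2pow.le
            have := mul_le_mul_of_nonneg_left h2 h2pow.le
            linarith
        _ = 2 ^ μ * M * q' (n - m) + 2 ^ μ * M * p' m := by ring
    calc ∑ m ∈ Finset.Icc K (n - K), p' m * q' (n - m) * (n:ℝ) ^ μ
        ≤ ∑ m ∈ Finset.Icc K (n - K), (2 ^ μ * M * q' (n - m) + 2 ^ μ * M * p' m) :=
          Finset.sum_le_sum hterm
      _ = 2 ^ μ * M * (∑ m ∈ Finset.Icc K (n - K), q' (n - m))
          + 2 ^ μ * M * ∑ m ∈ Finset.Icc K (n - K), p' m := by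
          rw [Finset.sum_add_distrib, ← Finset.mul_sum, ← Finset.mul_sum]
      _ ≤ 2 ^ μ * M * (Q - QK) + 2 ^ μ * M * (P - PK) := by
          have hpos : (0:ℝ) ≤ 2 ^ μ * M := by positivity
          have := mul_le_mul_of_nonneg_left hqtail hpos
          have := mul_le_mul_of_nonneg_left hptail hpos
          linarith
      _ ≤ 2 ^ μ * M * (2 * ε') := by
          have hpos : (0:ℝ) ≤ 2 ^ μ * M := by positivity
          have h1 := mul_le_mul_of_nonneg_left hKq.le hpos
          have h2 := mul_le_mul_of_nonneg_left hKp.le hpos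
          linarith
  -- assembly
  have hTp0 : 0 ≤ P - PK := by linarith
  have hTq0 : 0 ≤ Q - QK := by linarith
  set a := ∑ m ∈ Finset.range K, p' m * q' (n - m) * (n:ℝ) ^ μ with hadef
  set b := ∑ m ∈ Finset.Icc K (n - K), p' m * q' (n - m) * (n:ℝ) ^ μ with hbdef
  set c' := ∑ j ∈ Finset.range K, q' j * (p (n - j) * α ^ (n - j) * (n:ℝ) ^ μ) with hcdef
  rw [hsum_split, hthird]
  have key : |a + b + c' - (cp * Q + cq * P)|
      ≤ |a - PK * cq| + |c' - QK * cp| + |b| + |cq * (P - PK)| + |cp * (Q - QK)| := by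
    have hre : a + b + c' - (cp * Q + cq * P)
        = (a - PK * cq) + (c' - QK * cp) + b + (-(cq * (P - PK))) + (-(cp * (Q - QK))) := by
      ring
    rw [hre]
    calc |(a - PK * cq) + (c' - QK * cp) + b + (-(cq * (P - PK))) + (-(cp * (Q - QK)))|
        ≤ |(a - PK * cq) + (c' - QK * cp) + b + (-(cq * (P - PK)))| + |(-(cp * (Q - QK)))| :=
          abs_add_le _ _
      _ ≤ |(a - PK * cq) + (c' - QK * cp) + b| + |(-(cq * (P - PK)))| + |(-(cp * (Q - QK)))| := by
          have := abs_add_le ((a - PK * cq) + (c' - QK * cp) + b) (-(cq * (P - PK)))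
          linarith
      _ ≤ |(a - PK * cq) + (c' - QK * cp)| + |b| + |(-(cq * (P - PK)))| + |(-(cp * (Q - QK)))| := by
          have := abs_add_le ((a - PK * cq) + (c' - QK * cp)) b
          linarith
      _ ≤ |a - PK * cq| + |c' - QK * cp| + |b| + |cq * (P - PK)| + |cp * (Q - QK)| := by
          have := abs_add_le (a - PK * cq) (c' - QK * cp)
          rw [abs_neg, abs_neg]
          linarith
  have h5 : |cq * (P - PK)| ≤ M * ε' := by
    rw [abs_of_nonneg (mul_nonneg hcq0 hTp0)]
    calc cq * (P - PK) ≤ M * (P - PK) := mul_le_mul_of_nonneg_right hcqM hTp0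
      _ ≤ M * ε' := mul_le_mul_of_nonneg_left hKp.le hM0.le
  have h6 : |cp * (Q - QK)| ≤ M * ε' := by
    rw [abs_of_nonneg (mul_nonneg hcp0 hTq0)]
    calc cp * (Q - QK) ≤ M * (Q - QK) := mul_le_mul_of_nonneg_right hcpM hTq0
      _ ≤ M * ε' := mul_le_mul_of_nonneg_left hKq.le hM0.le
  have hbabs : |b| ≤ 2 ^ μ * M * (2 * ε') := by
    rw [abs_of_nonneg hmid_nonneg]
    exact hmid_le
  have hεD : ε' * D = ε / 2 := by
    rw [hε'def]
    field_simp
  have hεε : ε / 2 < ε := by linarith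
  have hsum_bound : |a + b + c' - (cp * Q + cq * P)|
      < ε' + ε' + 2 ^ μ * M * (2 * ε') + M * ε' + M * ε' := by
    linarith [key, hAn, hCn, hbabs, h5, h6]
  have hcollect : ε' + ε' + 2 ^ μ * M * (2 * ε') + M * ε' + M * ε' = ε' * D := by
    rw [hDdef]; ring
  linarith [hεD, hεε]

/- Lemma 3, second case: for fixed `a ≥ 1`, with
`c_a = ∑_{i=1}^a C(a-i+2,2)·r(i)` and `ρ = ∑_{n≥1} r(n)·α^n > 0`,
`δ₂(n, n-a)/δ₂(n) → (1-α)³·c_a·α^a/ρ`. -/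
theorem stmt_12 (μ α c : ℝ) (hμ : 1 < μ) (hα0 : 0 < α) (hα1 : α < 1) (hc : 0 < c)
    (r : ℕ → ℝ) (hr0 : r 0 = 0) (hrpos : ∀ n, 0 ≤ r n)
    (hasym : Tendsto (fun n : ℕ => r n * (n : ℝ) ^ μ * α ^ n) atTop (nhds c))
    (ρ : ℝ) (hρ : ρ = ∑' n : ℕ, r n * α ^ n) (hρpos : 0 < ρ)
    (δ₂ : ℕ → ℝ)
    (hδ₂ : ∀ n, δ₂ n = ∑ s ∈ Finset.range (n + 1), ∑ t ∈ Finset.range (n - s + 1),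
      r s * r t * (Nat.choose (n - s - t + 2) 2 : ℝ))
    (δ₂x : ℕ → ℕ → ℝ)
    (hδ₂x : ∀ n x, δ₂x n x = 2 * r x * ∑ t ∈ Finset.Icc 1 (min x (n - x)),
      r t * (Nat.choose (n - x - t + 2) 2 : ℝ))
    (a : ℕ) (ha : 1 ≤ a)
    (ca : ℝ) (hca : ca = ∑ i ∈ Finset.Icc 1 a, (Nat.choose (a - i + 2) 2 : ℝ) * r i) :
    Tendsto (fun n => δ₂x n (n - a) / δ₂ n) atTop
      (nhds ((1 - α) ^ 3 * ca * α ^ a / ρ)) := by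
  have hμ0 : (0:ℝ) < μ := by linarith
  have h1α : (0:ℝ) < 1 - α := by linarith
  have hα' : ‖α‖ < 1 := by rw [Real.norm_eq_abs, abs_of_pos hα0]; exact hα1
  have hasym' : Tendsto (fun n : ℕ => r n * α ^ n * (n : ℝ) ^ μ) atTop (nhds c) :=
    hasym.congr fun n => by ring
  -- summability of r n * α^n
  have hsummable : Summable (fun n => r n * α ^ n) := by
    obtain ⟨M, hM⟩ := hasym'.bddAbove_range
    have hle : ∀ n : ℕ, r n * α ^ n ≤ M * (1 / (n:ℝ) ^ μ) := by
      intro n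
      rcases Nat.eq_zero_or_pos n with rfl | hn
      · simp [hr0, Real.zero_rpow (ne_of_gt hμ0)]
      · have hnpos : (0:ℝ) < (n:ℝ) ^ μ :=
          Real.rpow_pos_of_pos (by exact_mod_cast hn) μ
        have hbd := hM (Set.mem_range_self n)
        calc r n * α ^ n = (r n * α ^ n * (n:ℝ) ^ μ) * (1 / (n:ℝ) ^ μ) := by
              field_simp
          _ ≤ M * (1 / (n:ℝ) ^ μ) :=
              mul_le_mul_of_nonneg_right hbd (by positivity)
    exact Summable.of_nonneg_of_le (fun n => mul_nonneg (hrpos n) (by positivity)) hle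
      ((Real.summable_one_div_nat_rpow.2 hμ).mul_left M)
  have hasSum_r : HasSum (fun n => r n * α ^ n) ρ := hρ ▸ hsummable.hasSum
  have hnorm_r : Summable (fun n => ‖r n * α ^ n‖) :=
    hsummable.congr fun n =>
      (Real.norm_of_nonneg (mul_nonneg (hrpos n) (by positivity))).symm
  -- the polynomial factor
  set qc : ℕ → ℝ := fun u => (Nat.choose (u + 2) 2 : ℝ) with hqcdef
  have hqc0 : ∀ u, 0 ≤ qc u := fun u => by positivity
  have hQc : HasSum (fun u => qc u * α ^ u) (1 / (1 - α) ^ 3) := by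
    have := hasSum_choose_mul_geometric_of_norm_lt_one 2 hα'
    norm_num at this ⊢
    exact this
  have hnorm_qc : Summable (fun u => ‖qc u * α ^ u‖) :=
    hQc.summable.congr fun n =>
      (Real.norm_of_nonneg (mul_nonneg (hqc0 n) (by positivity))).symm
  have hqct : Tendsto (fun u : ℕ => qc u * α ^ u * (u:ℝ) ^ μ) atTop (nhds 0) := by
    set k : ℕ := ⌈μ⌉₊ with hk
    have hg : Tendsto (fun u : ℕ => 9 * ((u:ℝ) ^ (k + 2) * α ^ u)) atTop (nhds 0) := by
      have := (summable_pow_mul_geometric_of_norm_lt_one (k + 2) hα').tendsto_atTop_zero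
      have h9 := this.const_mul (9:ℝ)
      simpa using h9
    apply squeeze_zero' ?_ ?_ hg
    · filter_upwards with u
      positivity
    · filter_upwards [eventually_ge_atTop 1] with u hu
      have hu1 : (1:ℝ) ≤ (u:ℝ) := by exact_mod_cast hu
      have hchoose : qc u ≤ 9 * (u:ℝ) ^ 2 := by
        have h1 : (u + 2).choose 2 ≤ (u + 2) ^ 2 := Nat.choose_le_pow _ _
        have h2 : (u + 2) ^ 2 ≤ 9 * u ^ 2 := by nlinarith [hu]
        have : (u + 2).choose 2 ≤ 9 * u ^ 2 := le_trans h1 h2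
        simp only [hqcdef]
        exact_mod_cast this
      have hrpow : (u:ℝ) ^ μ ≤ (u:ℝ) ^ (k:ℕ) := by
        rw [← Real.rpow_natCast (u:ℝ) k]
        exact Real.rpow_le_rpow_of_exponent_le hu1 (Nat.le_ceil μ)
      calc qc u * α ^ u * (u:ℝ) ^ μ
          ≤ (9 * (u:ℝ) ^ 2) * α ^ u * (u:ℝ) ^ μ := by
            have h1 : (0:ℝ) ≤ α ^ u := by positivity
            have h2 : (0:ℝ) ≤ (u:ℝ) ^ μ := Real.rpow_nonneg (by positivity) μ
            apply mul_le_mul_of_nonneg_right (mul_le_mul_of_nonneg_right hchoose h1) h2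
        _ ≤ (9 * (u:ℝ) ^ 2) * α ^ u * (u:ℝ) ^ (k:ℕ) := by
            have h3 : (0:ℝ) ≤ 9 * (u:ℝ) ^ 2 * α ^ u := by positivity
            exact mul_le_mul_of_nonneg_left hrpow h3
        _ = 9 * ((u:ℝ) ^ (k + 2) * α ^ u) := by
            rw [pow_add]
            ring
  -- first convolution : b
  set b : ℕ → ℝ := fun n => ∑ m ∈ Finset.range (n + 1), r m * qc (n - m) with hbdef
  have hb0 : ∀ n, 0 ≤ b n := fun n =>
    Finset.sum_nonneg fun m _ => mul_nonneg (hrpos m) (hqc0 _)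
  have hbt : Tendsto (fun n : ℕ => b n * α ^ n * (n:ℝ) ^ μ) atTop
      (nhds (c * (1 / (1 - α) ^ 3) + 0 * ρ)) := by
    have := my_conv_asymp hα0 hμ hrpos hqc0 hasym' hqct hasSum_r hQc
    exact this
  have hQb : HasSum (fun n => b n * α ^ n) (ρ * (1 / (1 - α) ^ 3)) := by
    have hmain := hasSum_sum_range_mul_of_summable_norm hnorm_r hnorm_qc
    rw [hasSum_r.tsum_eq, hQc.tsum_eq] at hmain
    have heq : (fun n : ℕ => ∑ k ∈ Finset.range (n + 1), r k * α ^ k * (qc (n - k) * α ^ (n - k)))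
        = fun n => b n * α ^ n := by
      funext n
      simp only [hbdef]
      rw [Finset.sum_mul]
      refine Finset.sum_congr rfl fun m hm => ?_
      simp only [Finset.mem_range] at hm
      have hmn : m + (n - m) = n := by omega
      have hpow : α ^ n = α ^ m * α ^ (n - m) := by rw [← pow_add, hmn]
      rw [hpow]
      ring
    rw [heq] at hmain
    exact hmain
  -- second convolution : δ₂
  have hδt : Tendsto (fun n : ℕ =>
      (∑ m ∈ Finset.range (n + 1), r m * b (n - m)) * α ^ n * (n:ℝ) ^ μ) atTop
      (nhds (c * (ρ * (1 / (1 - α) ^ 3)) + (c * (1 / (1 - α) ^ 3) + 0 * ρ) * ρ)) :=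
    my_conv_asymp hα0 hμ hrpos hb0 hasym' hbt hasSum_r hQb
  have hδeq : ∀ n, δ₂ n = ∑ m ∈ Finset.range (n + 1), r m * b (n - m) := by
    intro n
    rw [hδ₂ n]
    refine Finset.sum_congr rfl fun s hs => ?_
    simp only [hbdef]
    rw [Finset.mul_sum]
    refine Finset.sum_congr rfl fun t ht => ?_
    simp only [hqcdef]
    ring
  set L₂ : ℝ := c * (ρ * (1 / (1 - α) ^ 3)) + (c * (1 / (1 - α) ^ 3) + 0 * ρ) * ρ with hL₂def
  have hX : (0:ℝ) < 1 / (1 - α) ^ 3 := div_pos one_pos (pow_pos h1α 3)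
  have hL₂pos : 0 < L₂ := by
    rw [hL₂def]
    have h1 : 0 < c * (ρ * (1 / (1 - α) ^ 3)) := mul_pos hc (mul_pos hρpos hX)
    have h2 : 0 < (c * (1 / (1 - α) ^ 3) + 0 * ρ) * ρ := by
      apply mul_pos _ hρpos
      have := mul_pos hc hX
      linarith
    linarith
  have hδ₂t : Tendsto (fun n : ℕ => δ₂ n * α ^ n * (n:ℝ) ^ μ) atTop (nhds L₂) := by
    apply hδt.congr
    intro n
    rw [hδeq n]
  -- numerator
  have hnum_eq : ∀ n, 2 * a ≤ n → δ₂x n (n - a) = 2 * r (n - a) * ca := by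
    intro n hn
    rw [hδ₂x n (n - a)]
    have h1 : n - (n - a) = a := by omega
    have h2 : min (n - a) (n - (n - a)) = a := by
      rw [h1]
      exact min_eq_right (by omega)
    rw [h2, hca]
    congr 1
    refine Finset.sum_congr rfl fun t ht => ?_
    rw [h1]
    ring
  have hshift := my_shift hα0 hμ0 hasym' a
  have hnum_t : Tendsto (fun n : ℕ => δ₂x n (n - a) * α ^ n * (n:ℝ) ^ μ) atTop
      (nhds (2 * c * ca * α ^ a)) := by
    have h1 : Tendsto (fun n : ℕ =>
        (2 * ca * α ^ a) * (r (n - a) * α ^ (n - a) * (n:ℝ) ^ μ)) atTop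
        (nhds ((2 * ca * α ^ a) * c)) := hshift.const_mul _
    have h2 : (2 * ca * α ^ a) * c = 2 * c * ca * α ^ a := by ring
    rw [h2] at h1
    apply h1.congr'
    filter_upwards [eventually_ge_atTop (2 * a)] with n hn
    rw [hnum_eq n hn]
    have hpow : α ^ n = α ^ (n - a) * α ^ a := by
      rw [← pow_add]
      congr 1
      omega
    rw [hpow]
    ring
  -- conclusion
  have hratio := hnum_t.div hδ₂t (ne_of_gt hL₂pos)
  have hlim : 2 * c * ca * α ^ a / L₂ = (1 - α) ^ 3 * ca * α ^ a / ρ := by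
    rw [hL₂def]
    have hne : (1 - α) ^ 3 ≠ 0 := ne_of_gt (pow_pos h1α 3)
    field_simp
    ring
  rw [hlim] at hratio
  apply hratio.congr'
  filter_upwards [eventually_ge_atTop 1] with n hn
  have hn0 : (0:ℝ) < (n:ℝ) ^ μ := Real.rpow_pos_of_pos (by exact_mod_cast hn) μ
  have hne : α ^ n * (n:ℝ) ^ μ ≠ 0 := by positivity
  simp only [Pi.div_apply]
  rw [mul_assoc, mul_assoc, mul_div_mul_right _ _ hne]
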